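/- Let N ≥ 1, let Ω ⊆ ℝ^N be open, let ρ : Ω → ℝ satisfy ρ(x) > 0 for all x ∈ Ω, and let V : Ω → ℝ be twice continuously differentiable with ΔV(x) ≤ −ρ(x) for all x ∈ Ω. Let G : ℝ → ℝ be a continuously differentiable, strictly increasing bijection of ℝ onto ℝ with G'(s) ≥ α₀ for all s ∈ ℝ, for some α₀ > 0. Let M, λ, δ > 0 with M ≥ 2λδ/α₀, let A ∈ ℝ and t₀ ∈ ℝ, and define w(x,t) := G^{-1}(−M V(x) + A − λ (t − t₀)²) for x ∈ Ω and t ∈ ℝ. Then for every x ∈ Ω and every t with |t − t₀| ≤ δ, w is differentiable in t at (x,t), the function y ↦ G(w(y,t)) is twice continuously differentiable on Ω, and ρ(x) ∂_t w(x,t) − Δ_y[G(w(·,t))](x) ≤ 0. -/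

import Mathlib

open MeasureTheory Metric Set Filter

/-- The Laplacian of `f : ℝ^N → ℝ` at `x`: the sum of the pure second derivatives. -/
noncomputable def lap {N : ℕ} (f : EuclideanSpace ℝ (Fin N) → ℝ)
    (x : EuclideanSpace ℝ (Fin N)) : ℝ :=
  ∑ i : Fin N, iteratedFDeriv ℝ 2 f x ![EuclideanSpace.single i 1, EuclideanSpace.single i 1]

/-- Auxiliary: the Laplacian of `y ↦ c • V y + C` at a point of an open set where `V` is `C²`. -/
lemma lap_smul_add_const {N : ℕ} {Ω : Set (EuclideanSpace ℝ (Fin N))} (hΩ : IsOpen Ω)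
    {V : EuclideanSpace ℝ (Fin N) → ℝ} (hV : ContDiffOn ℝ 2 V Ω)
    {x : EuclideanSpace ℝ (Fin N)} (hx : x ∈ Ω) (c C : ℝ) :
    lap (fun y => c • V y + C) x = c * lap V x := by
  unfold lap
  rw [Finset.mul_sum]
  refine Finset.sum_congr rfl fun i _ => ?_
  set m : Fin 2 → EuclideanSpace ℝ (Fin N) :=
    ![EuclideanSpace.single i 1, EuclideanSpace.single i 1] with hm
  have h1 : ContDiffOn ℝ 2 (fun y => c • V y) Ω := hV.const_smul c
  have h2 : ContDiffOn ℝ 2 (fun _ : EuclideanSpace ℝ (Fin N) => C) Ω := contDiffOn_const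
  have e0 : iteratedFDeriv ℝ 2 (fun y => c • V y + C) x m
      = iteratedFDerivWithin ℝ 2 (fun y => c • V y + C) Ω x m := by
    rw [iteratedFDerivWithin_of_isOpen 2 hΩ hx]
  have e1 : iteratedFDerivWithin ℝ 2 (fun y => c • V y + C) Ω x
      = iteratedFDerivWithin ℝ 2 (fun y => c • V y) Ω x
        + iteratedFDerivWithin ℝ 2 (fun _ : EuclideanSpace ℝ (Fin N) => C) Ω x :=
    iteratedFDerivWithin_add_apply' (h1 x hx) (h2 x hx) hΩ.uniqueDiffOn hx
  have e2 : iteratedFDerivWithin ℝ 2 (fun _ : EuclideanSpace ℝ (Fin N) => C) Ω x = 0 :=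
    congrFun (iteratedFDerivWithin_succ_const (s := Ω) 1 C) x
  have e3' : (fun y => c • V y) = c • V := rfl
  have e3 : iteratedFDerivWithin ℝ 2 (fun y => c • V y) Ω x
      = c • iteratedFDerivWithin ℝ 2 V Ω x := by
    rw [e3']
    exact iteratedFDerivWithin_const_smul_apply (f := V) (a := c) (hV x hx) hΩ.uniqueDiffOn hx
  have e4 : iteratedFDerivWithin ℝ 2 V Ω x = iteratedFDeriv ℝ 2 V x :=
    iteratedFDerivWithin_of_isOpen 2 hΩ hx
  rw [e0, e1, e2, e3, e4]
  simp [smul_eq_mul]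

/-- the time-dependent barrier
`w(x,t) = G⁻¹(-M V(x) + A - λ(t-t₀)²)` is a (classical) subsolution of
`ρ ∂ₜ w = Δ[G(w)]` for `|t - t₀| ≤ δ`, provided `ΔV ≤ -ρ`, `G' ≥ α₀ > 0` and
`M ≥ 2λδ/α₀`. -/
theorem barrier_subsolution (N : ℕ) (hN : 1 ≤ N)
    (Ω : Set (EuclideanSpace ℝ (Fin N))) (hΩ : IsOpen Ω)
    (ρ : EuclideanSpace ℝ (Fin N) → ℝ) (hρpos : ∀ x ∈ Ω, 0 < ρ x)
    (V : EuclideanSpace ℝ (Fin N) → ℝ) (hV : ContDiffOn ℝ 2 V Ω)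
    (hVρ : ∀ x ∈ Ω, lap V x ≤ -ρ x)
    (G : ℝ → ℝ) (hG : ContDiff ℝ 1 G) (hGmono : StrictMono G)
    (hGbij : Function.Bijective G)
    (α₀ : ℝ) (hα₀ : 0 < α₀) (hG' : ∀ s : ℝ, α₀ ≤ deriv G s)
    (M lam δ : ℝ) (hM : 0 < M) (hlam : 0 < lam) (hδ : 0 < δ)
    (hMge : 2 * lam * δ / α₀ ≤ M)
    (A t₀ : ℝ) :
    ∀ x ∈ Ω, ∀ t : ℝ, |t - t₀| ≤ δ →
      DifferentiableAt ℝ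
        (fun s => Function.invFun G (-(M * V x) + A - lam * (s - t₀) ^ 2)) t ∧
      ContDiffOn ℝ 2
        (fun y => G (Function.invFun G (-(M * V y) + A - lam * (t - t₀) ^ 2))) Ω ∧
      ρ x * deriv (fun s => Function.invFun G (-(M * V x) + A - lam * (s - t₀) ^ 2)) t -
        lap (fun y => G (Function.invFun G (-(M * V y) + A - lam * (t - t₀) ^ 2))) x ≤ 0 := by
  have hGsurj := hGbij.2
  have hGR : ∀ z : ℝ, G (Function.invFun G z) = z := fun z =>
    Function.rightInverse_invFun hGsurj z
  -- continuity of the inverse function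
  set e := StrictMono.orderIsoOfSurjective G hGmono hGsurj with he
  have hinv_eq : Function.invFun G = ⇑e.symm := by
    funext z
    apply hGbij.1
    rw [hGR z]
    exact (e.apply_symm_apply z).symm
  have hinv_cont : Continuous (Function.invFun G) := by
    rw [hinv_eq]; exact e.symm.continuous
  have hGd : ∀ y : ℝ, HasDerivAt G (deriv G y) y := fun y =>
    (hG.differentiable one_ne_zero y).hasDerivAt
  have hGpos : ∀ y : ℝ, 0 < deriv G y := fun y => lt_of_lt_of_le hα₀ (hG' y)
  have hinvd : ∀ z : ℝ, HasDerivAt (Function.invFun G)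
      (deriv G (Function.invFun G z))⁻¹ z := fun z =>
    HasDerivAt.of_local_left_inverse hinv_cont.continuousAt (hGd _) (hGpos _).ne'
      (Eventually.of_forall hGR)
  intro x hx t ht
  -- time derivative of the inner function
  have hinner : HasDerivAt (fun s : ℝ => -(M * V x) + A - lam * (s - t₀) ^ 2)
      (-(lam * (2 * (t - t₀)))) t := by
    have h1 : HasDerivAt (fun s : ℝ => (s - t₀) ^ 2) (2 * (t - t₀)) t := by
      simpa using ((hasDerivAt_id t).sub_const t₀).fun_pow 2
    exact (h1.const_mul lam).const_sub (-(M * V x) + A)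
  set z : ℝ := -(M * V x) + A - lam * (t - t₀) ^ 2 with hz
  set g : ℝ := deriv G (Function.invFun G z) with hg
  have hw : HasDerivAt (fun s : ℝ => Function.invFun G (-(M * V x) + A - lam * (s - t₀) ^ 2))
      (g⁻¹ * -(lam * (2 * (t - t₀)))) t := by
    have := (hinvd z).comp t hinner
    simpa [Function.comp_def] using this
  refine ⟨hw.differentiableAt, ?_, ?_⟩
  · have hfun : (fun y => G (Function.invFun G (-(M * V y) + A - lam * (t - t₀) ^ 2)))
        = fun y => -(M * V y) + A - lam * (t - t₀) ^ 2 := funext fun y => hGR _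
    rw [hfun]
    exact ((contDiffOn_const.mul hV).neg.add contDiffOn_const).sub contDiffOn_const
  · have hfun : (fun y => G (Function.invFun G (-(M * V y) + A - lam * (t - t₀) ^ 2)))
        = fun y => (-M) • V y + (A - lam * (t - t₀) ^ 2) := by
      funext y; rw [hGR, smul_eq_mul]; ring
    rw [hw.deriv, hfun, lap_smul_add_const hΩ hV hx]
    -- final inequality
    have hgpos : 0 < g := hGpos _
    have hgα : α₀ ≤ g := hG' _
    have hE : -(lam * (2 * (t - t₀))) ≤ 2 * lam * δ := by
      have h1 := (abs_le.mp ht).1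
      nlinarith
    have hD : g⁻¹ * -(lam * (2 * (t - t₀))) ≤ M := by
      rcases le_or_gt (-(lam * (2 * (t - t₀)))) 0 with h | h
      · exact le_trans (mul_nonpos_of_nonneg_of_nonpos (inv_nonneg.mpr hgpos.le) h) hM.le
      · have h1 : g⁻¹ ≤ α₀⁻¹ := by gcongr
        calc g⁻¹ * -(lam * (2 * (t - t₀))) ≤ α₀⁻¹ * -(lam * (2 * (t - t₀))) :=
              mul_le_mul_of_nonneg_right h1 h.le
          _ ≤ α₀⁻¹ * (2 * lam * δ) := by
              exact mul_le_mul_of_nonneg_left hE (inv_nonneg.mpr hα₀.le)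
          _ = 2 * lam * δ / α₀ := by rw [div_eq_inv_mul]
          _ ≤ M := hMge
    have hρ := hρpos x hx
    have hlapV := hVρ x hx
    nlinarith [mul_le_mul_of_nonneg_left hlapV hM.le, mul_le_mul_of_nonneg_left hD hρ.le]
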